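/- If two words x and y satisfy Levenshtein distance lev(x, y) ≤ d, then there exist words x' and y' such that x' is obtained from x by deleting at most d characters, y' is obtained from y by deleting at most d characters, and x' = y'. -/

import Mathlib

structure Levenshtein.Cost (α β δ : Type*) where
  delete : α → δ
  insert : β → δ
  substitute : α → β → δ

def Levenshtein.defaultCost {α : Type*} [DecidableEq α] : Levenshtein.Cost α α ℕ where
  delete _ := 1
  insert _ := 1
  substitute a b := if a = b then 0 else 1

def Levenshtein.impl {α β δ : Type*} [AddZeroClass δ] [Min δ] (C : Levenshtein.Cost α β δ)
    (xs : List α) (y : β) (d : {r : List δ // 0 < r.length}) : {r : List δ // 0 < r.length} :=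
  let ⟨ds, w⟩ := d
  xs.zip (ds.zip ds.tail) |>.foldr
    (init := ⟨[C.insert y + ds.getLast (List.length_pos_iff.mp w)], by simp⟩)
    (fun ⟨x, d₀, d₁⟩ ⟨r, w⟩ =>
      ⟨min (C.delete x + r[0]) (min (C.insert y + d₀) (C.substitute x y + d₁)) :: r, by simp⟩)

def suffixLevenshtein {α β δ : Type*} [AddZeroClass δ] [Min δ] (C : Levenshtein.Cost α β δ)
    (xs : List α) (ys : List β) : {r : List δ // 0 < r.length} :=
  ys.foldr
    (Levenshtein.impl C xs)
    (xs.foldr (init := ⟨[0], by simp⟩) (fun a ⟨r, w⟩ => ⟨(C.delete a + r[0]) :: r, by simp⟩))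

def levenshtein {α β δ : Type*} [AddZeroClass δ] [Min δ] (C : Levenshtein.Cost α β δ)
    (xs : List α) (ys : List β) : δ :=
  let ⟨r, w⟩ := suffixLevenshtein C xs ys
  r[0]

theorem Levenshtein.impl_cons_val {α β δ : Type*} [AddZeroClass δ] [Min δ] (C : Levenshtein.Cost α β δ)
    (x : α) (xs : List α) (y : β) (a : δ) (ds : List δ) (w : 0 < (a :: ds).length) (h : 0 < ds.length) :
    (Levenshtein.impl C (x :: xs) y ⟨a :: ds, w⟩).1 =
      min (C.delete x + (Levenshtein.impl C xs y ⟨ds, h⟩).1[0]'(Levenshtein.impl C xs y ⟨ds, h⟩).2)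
        (min (C.insert y + a) (C.substitute x y + ds[0])) :: (Levenshtein.impl C xs y ⟨ds, h⟩).1 := by
  cases ds with
  | nil => simp at h
  | cons b rest => rfl

theorem suffixLevenshtein_cons_val {α β δ : Type*} [AddZeroClass δ] [Min δ] (C : Levenshtein.Cost α β δ)
    (x : α) (xs : List α) (ys : List β) :
    (suffixLevenshtein C (x :: xs) ys).1 = levenshtein C (x :: xs) ys :: (suffixLevenshtein C xs ys).1 := by
  induction ys with
  | nil => rfl
  | cons y ys ih =>
    show (Levenshtein.impl C (x :: xs) y (suffixLevenshtein C (x :: xs) ys)).1 = _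
    have e : suffixLevenshtein C (x :: xs) ys = ⟨levenshtein C (x :: xs) ys :: (suffixLevenshtein C xs ys).1, by simp⟩ :=
      Subtype.ext ih
    rw [e, Levenshtein.impl_cons_val (h := (suffixLevenshtein C xs ys).2)]
    show _ = (Levenshtein.impl C (x :: xs) y (suffixLevenshtein C (x :: xs) ys)).1[0]'(Levenshtein.impl C (x :: xs) y (suffixLevenshtein C (x :: xs) ys)).2 :: _
    simp only [e, Levenshtein.impl_cons_val (h := (suffixLevenshtein C xs ys).2)]
    rfl

theorem levenshtein_cons_cons {α β δ : Type*} [AddZeroClass δ] [Min δ] (C : Levenshtein.Cost α β δ)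
    (x : α) (xs : List α) (y : β) (ys : List β) :
    levenshtein C (x :: xs) (y :: ys) =
      min (C.delete x + levenshtein C xs (y :: ys))
        (min (C.insert y + levenshtein C (x :: xs) ys)
          (C.substitute x y + levenshtein C xs ys)) := by
  have e : suffixLevenshtein C (x :: xs) ys = ⟨levenshtein C (x :: xs) ys :: (suffixLevenshtein C xs ys).1, by simp⟩ :=
    Subtype.ext (suffixLevenshtein_cons_val C x xs ys)
  show (Levenshtein.impl C (x :: xs) y (suffixLevenshtein C (x :: xs) ys)).1[0]'(Levenshtein.impl C (x :: xs) y (suffixLevenshtein C (x :: xs) ys)).2 = _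
  simp only [e, Levenshtein.impl_cons_val (h := (suffixLevenshtein C xs ys).2)]
  rfl

@[simp]
theorem levenshtein_nil_nil' {α β δ : Type*} [AddZeroClass δ] [Min δ] (C : Levenshtein.Cost α β δ) :
    levenshtein C ([] : List α) ([] : List β) = 0 := rfl

theorem sl_nil {α β δ : Type*} [AddZeroClass δ] [Min δ] (C : Levenshtein.Cost α β δ)
    (ys : List β) : (suffixLevenshtein C ([] : List α) ys).1 = [levenshtein C [] ys] := by
  cases ys with
  | nil => rfl
  | cons y ys => rfl

@[simp]
theorem levenshtein_nil_cons' {α β δ : Type*} [AddZeroClass δ] [Min δ] (C : Levenshtein.Cost α β δ)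
    (y : β) (ys : List β) :
    levenshtein C ([] : List α) (y :: ys) = C.insert y + levenshtein C [] ys := by
  have e : suffixLevenshtein C ([] : List α) ys = ⟨[levenshtein C [] ys], by simp⟩ := Subtype.ext (sl_nil C ys)
  show (Levenshtein.impl C [] y (suffixLevenshtein C ([] : List α) ys)).1[0]'(Levenshtein.impl C [] y (suffixLevenshtein C ([] : List α) ys)).2 = _
  rw [e]
  rfl

@[simp]
theorem levenshtein_cons_nil' {α β δ : Type*} [AddZeroClass δ] [Min δ] (C : Levenshtein.Cost α β δ)
    (x : α) (xs : List α) :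
    levenshtein C (x :: xs) ([] : List β) = C.delete x + levenshtein C xs [] := rfl

@[simp]
theorem defaultCost_delete' {α : Type*} [DecidableEq α] (a : α) :
    (Levenshtein.defaultCost : Levenshtein.Cost α α ℕ).delete a = 1 := rfl

@[simp]
theorem defaultCost_insert' {α : Type*} [DecidableEq α] (a : α) :
    (Levenshtein.defaultCost : Levenshtein.Cost α α ℕ).insert a = 1 := rfl

@[simp]
theorem defaultCost_substitute' {α : Type*} [DecidableEq α] (a b : α) :
    (Levenshtein.defaultCost : Levenshtein.Cost α α ℕ).substitute a b = if a = b then 0 else 1 := rfl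

lemma symdel_aux {σ : Type*} [DecidableEq σ] : ∀ (x y : List σ),
    ∃ z : List σ, z.Sublist x ∧
      x.length ≤ z.length + levenshtein Levenshtein.defaultCost x y ∧
      z.Sublist y ∧ y.length ≤ z.length + levenshtein Levenshtein.defaultCost x y
  | [], y => by
    refine ⟨[], List.Sublist.refl _, by simp, List.nil_sublist _, ?_⟩
    induction y with
    | nil => simp
    | cons b ys ih => simp_all; omega
  | a :: xs, [] => by
    obtain ⟨z, h1, h2, h3, h4⟩ := symdel_aux xs ([] : List σ)
    exact ⟨z, h1.trans (List.sublist_cons_self a xs), by simp_all <;> omega, h3, by simp_all <;> omega⟩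
  | a :: xs, b :: ys => by
    obtain ⟨z1, d1, d2, d3, d4⟩ := symdel_aux xs (b :: ys)
    obtain ⟨z2, i1, i2, i3, i4⟩ := symdel_aux (a :: xs) ys
    obtain ⟨z3, s1, s2, s3, s4⟩ := symdel_aux xs ys
    rw [levenshtein_cons_cons]
    rcases le_or_gt (Levenshtein.defaultCost.delete a + levenshtein Levenshtein.defaultCost xs (b :: ys))
        (min (Levenshtein.defaultCost.insert b + levenshtein Levenshtein.defaultCost (a :: xs) ys)
          (Levenshtein.defaultCost.substitute a b + levenshtein Levenshtein.defaultCost xs ys)) with hd | hd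
    · rw [min_eq_left hd]
      refine ⟨z1, d1.trans (List.sublist_cons_self a xs), ?_, d3, ?_⟩ <;> simp_all <;> omega
    rw [min_eq_right hd.le]
    rcases le_or_gt (Levenshtein.defaultCost.insert b + levenshtein Levenshtein.defaultCost (a :: xs) ys)
        (Levenshtein.defaultCost.substitute a b + levenshtein Levenshtein.defaultCost xs ys) with hi | hi
    · rw [min_eq_left hi]
      refine ⟨z2, i1, ?_, i3.trans (List.sublist_cons_self b ys), ?_⟩ <;> simp_all <;> omega
    rw [min_eq_right hi.le]
    by_cases hab : a = b
    · subst hab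
      refine ⟨a :: z3, s1.cons₂ a, ?_, s3.cons₂ a, ?_⟩ <;> simp_all <;> omega
    · refine ⟨z3, s1.trans (List.sublist_cons_self a xs), ?_,
        s3.trans (List.sublist_cons_self b ys), ?_⟩ <;> simp_all <;> omega
  termination_by x y => x.length + y.length

/-- Completeness of symmetric deletion lookup: if `lev(x,y) ≤ d` then `x` and `y`
share a common subsequence obtained from each by deleting at most `d` characters. -/
theorem symdel_complete {σ : Type*} [DecidableEq σ] (x y : List σ) (d : ℕ)
    (h : levenshtein Levenshtein.defaultCost x y ≤ d) :
    ∃ z : List σ, z.Sublist x ∧ x.length ≤ z.length + d ∧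
      z.Sublist y ∧ y.length ≤ z.length + d := by
  obtain ⟨z, h1, h2, h3, h4⟩ := symdel_aux x y
  exact ⟨z, h1, by omega, h3, by omega⟩
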